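/- Let ω, λ ∈ ℂ with λ ≠ 0, and let Ψ^L, Ψ^R : ℤ → ℂ satisfy the eigenvalue equations of the Wojcik model with eigenvalue λ and phase ω. Let z ∈ ℂ, z ≠ 0, be such that the families (Ψ^L(x) z^x)_{x ≥ 1} and (Ψ^R(x) z^x)_{x ≥ 1} are absolutely summable, and set f^L_+(z) = Σ_{x=1}^∞ Ψ^L(x) z^x, f^R_+(z) = Σ_{x=1}^∞ Ψ^R(x) z^x, α = Ψ^L(0), β = Ψ^R(0). Then (λ − 1/(√2 z)) f^L_+(z) − (1/(√2 z)) f^R_+(z) = −λα and −(z/√2) f^L_+(z) + (λ + z/√2) f^R_+(z) = ωz(α−β)/√2. -/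

import Mathlib

noncomputable section

/-- The coin phase of the Wojcik model: `ω` at the origin, `1` elsewhere. -/
def wojcikCoin (ω : ℂ) (x : ℤ) : ℂ := if x = 0 then ω else 1

/-- `ΨL, ΨR : ℤ → ℂ` satisfy the eigenvalue equations of the Wojcik model with
eigenvalue `lam` and phase `ω`. -/
def WojcikEigenEq (ω lam : ℂ) (ΨL ΨR : ℤ → ℂ) : Prop :=
  ∀ x : ℤ,
    lam * ΨL x = wojcikCoin ω (x + 1) / (Real.sqrt 2 : ℂ) * (ΨL (x + 1) + ΨR (x + 1)) ∧
    lam * ΨR x = wojcikCoin ω (x - 1) / (Real.sqrt 2 : ℂ) * (ΨL (x - 1) - ΨR (x - 1))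

theorem wojcik_generating_function_positive_part
    (ω lam : ℂ) (hlam : lam ≠ 0) (ΨL ΨR : ℤ → ℂ)
    (heig : WojcikEigenEq ω lam ΨL ΨR)
    (z : ℂ) (hz : z ≠ 0)
    (hL : Summable fun n : ℕ => ‖ΨL ((n : ℤ) + 1) * z ^ (n + 1)‖)
    (hR : Summable fun n : ℕ => ‖ΨR ((n : ℤ) + 1) * z ^ (n + 1)‖)
    (fL fR α β : ℂ)
    (hfL : fL = ∑' n : ℕ, ΨL ((n : ℤ) + 1) * z ^ (n + 1))
    (hfR : fR = ∑' n : ℕ, ΨR ((n : ℤ) + 1) * z ^ (n + 1))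
    (hα : α = ΨL 0) (hβ : β = ΨR 0) :
    (lam - 1 / ((Real.sqrt 2 : ℂ) * z)) * fL - 1 / ((Real.sqrt 2 : ℂ) * z) * fR = -lam * α ∧
    -(z / (Real.sqrt 2 : ℂ)) * fL + (lam + z / (Real.sqrt 2 : ℂ)) * fR =
      ω * z * (α - β) / (Real.sqrt 2 : ℂ) := by
  set s : ℂ := (Real.sqrt 2 : ℂ) with hsdef
  have hs : s ≠ 0 := by
    rw [hsdef]
    exact_mod_cast Complex.ofReal_ne_zero.mpr (by positivity : Real.sqrt 2 ≠ 0)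
  set termL : ℕ → ℂ := fun n => ΨL ((n : ℤ) + 1) * z ^ (n + 1) with htermL
  set termR : ℕ → ℂ := fun n => ΨR ((n : ℤ) + 1) * z ^ (n + 1) with htermR
  have htL : Summable termL :=
    Summable.of_norm (hL.congr fun n => rfl)
  have htR : Summable termR :=
    Summable.of_norm (hR.congr fun n => rfl)
  -- pointwise eigenvalue equations on nonnegative sites
  have eqL : ∀ n : ℕ, lam * ΨL (n : ℤ) = 1 / s * (ΨL ((n : ℤ) + 1) + ΨR ((n : ℤ) + 1)) := by
    intro n
    have h := (heig n).1
    have hne : ((n : ℤ) + 1) ≠ 0 := by omega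
    simpa [wojcikCoin, hne] using h
  have eqR : ∀ n : ℕ,
      lam * ΨR ((n : ℤ) + 1 + 1) = 1 / s * (ΨL ((n : ℤ) + 1) - ΨR ((n : ℤ) + 1)) := by
    intro n
    have hne : ((n : ℤ) + 1) ≠ 0 := by omega
    have h := (heig ((n : ℤ) + 1 + 1)).2
    rw [show ((n : ℤ) + 1 + 1 - 1) = (n : ℤ) + 1 by ring] at h
    rw [h, wojcikCoin, if_neg hne]
  have eqR0 : lam * ΨR 1 = ω / s * (ΨL 0 - ΨR 0) := by
    have h := (heig 1).2
    simpa [wojcikCoin] using h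
  -- First identity
  have key1 : lam * α * z + lam * z * fL = 1 / s * (fL + fR) := by
    have h1 : (fun n : ℕ => lam * ΨL (n : ℤ) * z ^ (n + 1)) =
        fun n : ℕ => 1 / s * (termL n + termR n) := by
      funext n
      simp only [htermL, htermR]
      linear_combination z ^ (n + 1) * eqL n
    have hsum : Summable (fun n : ℕ => lam * ΨL (n : ℤ) * z ^ (n + 1)) := by
      rw [h1]; exact ((htL.add htR).mul_left _)
    have hA : (∑' n : ℕ, lam * ΨL (n : ℤ) * z ^ (n + 1)) = 1 / s * (fL + fR) := by
      rw [h1, tsum_mul_left, Summable.tsum_add htL htR, hfL, hfR]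
    have hB : (∑' n : ℕ, lam * ΨL (n : ℤ) * z ^ (n + 1)) = lam * α * z + lam * z * fL := by
      rw [Summable.tsum_eq_zero_add hsum]
      have h2 : (fun n : ℕ => lam * ΨL ((n + 1 : ℕ) : ℤ) * z ^ (n + 1 + 1)) =
          fun n : ℕ => (lam * z) * termL n := by
        funext n
        simp only [htermL]
        push_cast
        ring
      rw [h2, tsum_mul_left, ← hfL]
      push_cast
      rw [hα]
      ring
    rw [← hB, hA]
  -- Second identity
  have key2 : lam * fR = ω / s * (α - β) * z + z / s * (fL - fR) := by
    have hsum : Summable (fun n : ℕ => lam * termR n) := htR.mul_left _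
    have hA : (∑' n : ℕ, lam * termR n) = lam * fR := by
      rw [tsum_mul_left, hfR]
    have hB : (∑' n : ℕ, lam * termR n) = ω / s * (α - β) * z + z / s * (fL - fR) := by
      rw [Summable.tsum_eq_zero_add hsum]
      have h2 : (fun n : ℕ => lam * termR (n + 1)) =
          fun n : ℕ => (z / s) * (termL n - termR n) := by
        funext n
        simp only [htermL, htermR]
        push_cast
        linear_combination z ^ (n + 1 + 1) * eqR n
      rw [h2, tsum_mul_left, Summable.tsum_sub htL htR, ← hfL, ← hfR]
      simp only [htermR]
      push_cast
      norm_num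
      rw [hα, hβ]
      linear_combination z * eqR0
    rw [← hA, hB]
  field_simp at key1 key2
  refine ⟨?_, ?_⟩
  · field_simp
    linear_combination key1
  · field_simp
    linear_combination key2
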